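/- Let k, r ≥ 2, Q = (r-1)(k-1). Suppose V : ℕ × ℕ → ℂ satisfies (rad L)_m V(m,n) = (rad L)_n V(m,n) for all m, n ∈ ℕ, where rad L acts on the first (resp. second) variable by (rad L) W(0) = W(0) − W(1) and (rad L) W(p) = (1/(r(k-1)))[(Q+1)W(p) − W(p−1) − Q W(p+1)] for p ≥ 1. Then V is symmetric: V(m,n) = V(n,m) for all m, n ∈ ℕ. -/
import Mathlib


/-- The radial part of the Laplacian on a symmetric graph of type `k` and order `r`. -/
noncomputable def radL (k r : ℕ) (W : ℕ → ℂ) : ℕ → ℂ :=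
  fun p => match p with
  | 0 => W 0 - W 1
  | p + 1 => (1 / ((r : ℂ) * ((k : ℂ) - 1))) *
      ((((r : ℂ) - 1) * ((k : ℂ) - 1) + 1) * W (p + 1) - W p
        - ((r : ℂ) - 1) * ((k : ℂ) - 1) * W (p + 2))

theorem stmt14 (k r : ℕ) (hk : 2 ≤ k) (hr : 2 ≤ r)
    (V : ℕ → ℕ → ℂ)
    (hV : ∀ m n : ℕ, radL k r (fun p => V p n) m = radL k r (fun p => V m p) n) :
    ∀ m n : ℕ, V m n = V n m := by
  have hk1 : (k : ℂ) - 1 ≠ 0 := sub_ne_zero_of_ne (by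
    exact_mod_cast (by omega : (k:ℕ) ≠ 1))
  have hr0 : (r : ℂ) ≠ 0 := by exact_mod_cast (by omega : (r:ℕ) ≠ 0)
  have hr1 : (r : ℂ) - 1 ≠ 0 := sub_ne_zero_of_ne (by
    exact_mod_cast (by omega : (r:ℕ) ≠ 1))
  have hQ : ((r:ℂ) - 1) * ((k:ℂ) - 1) ≠ 0 := mul_ne_zero hr1 hk1
  have base : V 1 0 = V 0 1 := by
    have h := hV 0 0
    simp only [radL] at h
    linear_combination -h
  have interior : ∀ p q : ℕ,
      V p (q+1) + ((r:ℂ) - 1) * ((k:ℂ) - 1) * V (p+2) (q+1)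
        = V (p+1) q + ((r:ℂ) - 1) * ((k:ℂ) - 1) * V (p+1) (q+2) := by
    intro p q
    have h := hV (p+1) (q+1)
    simp only [radL] at h
    field_simp at h
    linear_combination -h
  have bdry : ∀ c : ℕ,
      ((r:ℂ) - 1) * ((k:ℂ) - 1) * V (c+2) 0
        = (((r:ℂ) - 1) * ((k:ℂ) - 1) + 1) * V (c+1) 0 - V c 0
          - (r:ℂ) * ((k:ℂ) - 1) * (V (c+1) 0 - V (c+1) 1) := by
    intro c
    have h := hV (c+1) 0
    simp only [radL] at h
    field_simp at h
    linear_combination -h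
  have bdry' : ∀ c : ℕ,
      ((r:ℂ) - 1) * ((k:ℂ) - 1) * V 0 (c+2)
        = (((r:ℂ) - 1) * ((k:ℂ) - 1) + 1) * V 0 (c+1) - V 0 c
          - (r:ℂ) * ((k:ℂ) - 1) * (V 0 (c+1) - V 1 (c+1)) := by
    intro c
    have h := hV 0 (c+1)
    simp only [radL] at h
    field_simp at h
    linear_combination h
  suffices H : ∀ L m n : ℕ, m + n = L → V m n = V n m by
    intro m n; exact H (m+n) m n rfl
  intro L
  induction L using Nat.strong_induction_on with
  | _ L IH =>
    match L with
    | 0 =>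
      intro m n hmn
      obtain ⟨rfl, rfl⟩ : m = 0 ∧ n = 0 := by omega
      rfl
    | 1 =>
      intro m n hmn
      rcases (by omega : (m = 1 ∧ n = 0) ∨ (m = 0 ∧ n = 1)) with ⟨rfl, rfl⟩ | ⟨rfl, rfl⟩
      · exact base
      · exact base.symm
    | (L + 2) =>
      have step : ∀ p q : ℕ, p + q + 3 = L + 2 →
          V (p+2) (q+1) - V (q+1) (p+2) = V (p+1) (q+2) - V (q+2) (p+1) := by
        intro p q hpq
        have h1 := interior p q
        have h2 := interior q p
        have e1 : V p (q+1) = V (q+1) p := IH (p+q+1) (by omega) p (q+1) rfl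
        have e2 : V (p+1) q = V q (p+1) := IH (p+q+1) (by omega) (p+1) q (by omega)
        have key : ((r:ℂ) - 1) * ((k:ℂ) - 1) * (V (p+2) (q+1) - V (q+1) (p+2))
            = ((r:ℂ) - 1) * ((k:ℂ) - 1) * (V (p+1) (q+2) - V (q+2) (p+1)) := by
          linear_combination h1 + h2 - e1 + e2
        exact mul_left_cancel₀ hQ key
      have chainAll : ∀ t : ℕ, t ≤ L →
          V (L+1-t) (t+1) - V (t+1) (L+1-t) = V (L+1) 1 - V 1 (L+1) := by
        intro t ht
        induction t with
        | zero => norm_num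
        | succ t ih =>
          have ht' : t ≤ L := by omega
          have hstep := step (L-1-t) t (by omega)
          rw [show L-1-t+2 = L+1-t from by omega, show L-1-t+1 = L+1-(t+1) from by omega] at hstep
          rw [← hstep]
          exact ih ht'
      have d1 : V (L+1) 1 = V 1 (L+1) := by
        have h := chainAll L le_rfl
        rw [show L+1-L = 1 from by omega] at h
        linear_combination -h / 2
      have d0 : V (L+2) 0 = V 0 (L+2) := by
        have h1 := bdry L
        have h2 := bdry' L
        have e1 : V (L+1) 0 = V 0 (L+1) := IH (L+1) (by omega) (L+1) 0 (by omega)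
        have e2 : V L 0 = V 0 L := IH L (by omega) L 0 (by omega)
        have key : ((r:ℂ) - 1) * ((k:ℂ) - 1) * V (L+2) 0
            = ((r:ℂ) - 1) * ((k:ℂ) - 1) * V 0 (L+2) := by
          linear_combination h1 - h2 - ((r:ℂ)*((k:ℂ)-1) - ((r:ℂ)-1)*((k:ℂ)-1) - 1) * e1 - e2 + (r:ℂ)*((k:ℂ)-1) * d1
        exact mul_left_cancel₀ hQ key
      intro m n hmn
      rcases Nat.eq_zero_or_pos n with hn | hn
      · obtain rfl : m = L + 2 := by omega
        subst hn
        exact d0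
      rcases Nat.eq_zero_or_pos m with hm | hm
      · subst hm
        obtain rfl : n = L + 2 := by omega
        exact d0.symm
      · have h := chainAll (n-1) (by omega)
        rw [show L+1-(n-1) = m from by omega, show n-1+1 = n from by omega] at h
        have hd1 : V (L+1) 1 - V 1 (L+1) = 0 := by rw [d1]; ring
        rw [hd1] at h
        linear_combination h
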